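/- (Morse potential eigenstates.) Let D > 0, α > 0, set λ := √(2D)/α and ω₀ := √(2D)·α, let n ∈ ℕ satisfy n < λ − 1/2, and set ξ(x) := 2λ·exp(−αx) for x ∈ ℝ. Let L : (0,∞) → ℝ be a twice continuously differentiable function satisfying the generalized Laguerre differential equation ξ·L''(ξ) + (2λ − 2n − 1 + 1 − ξ)·L'(ξ) + n·L(ξ) = 0 for all ξ > 0. Define ψ : ℝ × ℝ → ℂ by ψ(x,t) := ξ(x)^{λ−n−1/2} · L(ξ(x)) · exp(−ξ(x)/2 − i·t·((n + 1/2) − (1/(2λ))(n + 1/2)²)·ω₀). Then ψ satisfies i∂_tψ(x,t) + ½∂_x²ψ(x,t) − D(1 − exp(−αx))²·ψ(x,t) = 0 for all (x,t) ∈ ℝ²; the same holds for any constant complex multiple of ψ. -/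

import Mathlib

noncomputable section

/-- `λ := √(2D)/α` for the Morse potential. -/
def morseLam (D α : ℝ) : ℝ := Real.sqrt (2 * D) / α

/-- `ω₀ := √(2D)·α` for the Morse potential. -/
def morseOmega (D α : ℝ) : ℝ := Real.sqrt (2 * D) * α

/-- `ξ(x) := 2λ·exp(−αx)`. -/
def morseXi (D α x : ℝ) : ℝ := 2 * morseLam D α * Real.exp (-α * x)

/-- The energy `E_n := ((n + 1/2) − (1/(2λ))(n + 1/2)²)·ω₀`. -/
def morseEnergy (D α : ℝ) (n : ℕ) : ℝ :=
  (((n : ℝ) + 1 / 2) - (1 / (2 * morseLam D α)) * ((n : ℝ) + 1 / 2) ^ 2) * morseOmega D α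

/-- The Morse eigenstate `ψ(x,t) = ξ(x)^{λ−n−1/2}·L(ξ(x))·exp(−ξ(x)/2 − i·t·E_n)`,
for a function `L` satisfying the generalized Laguerre differential equation. -/
def morseWave (D α : ℝ) (n : ℕ) (L : ℝ → ℝ) (x t : ℝ) : ℂ :=
  (((morseXi D α x ^ (morseLam D α - (n : ℝ) - 1 / 2) * L (morseXi D α x)
      * Real.exp (-(morseXi D α x) / 2)) : ℝ) : ℂ) *
    Complex.exp (-Complex.I * (t : ℂ) * ((morseEnergy D α n : ℝ) : ℂ))

private lemma morseXi_hasDerivAt (D α x : ℝ) :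
    HasDerivAt (morseXi D α) (-α * morseXi D α x) x := by
  unfold morseXi
  have h : HasDerivAt (fun x : ℝ => Real.exp (-α * x)) (Real.exp (-α * x) * (-α)) x := by
    simpa using ((hasDerivAt_id x).const_mul (-α)).exp
  have := h.const_mul (2 * morseLam D α)
  refine this.congr_deriv ?_
  ring

/-- Derivative of the basic building block `x ↦ ξ(x)^p · M(ξ(x)) · e^{−ξ(x)/2}`. -/
private lemma morseT_hasDerivAt (D α : ℝ) (hl : 0 < morseLam D α)
    (p : ℝ) (M M' : ℝ → ℝ) (hM : ∀ u, 0 < u → HasDerivAt M (M' u) u) (x : ℝ) :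
    HasDerivAt (fun y => morseXi D α y ^ p * M (morseXi D α y)
        * Real.exp (-(morseXi D α y) / 2))
      (-α * (morseXi D α x ^ p *
        (p * M (morseXi D α x) + morseXi D α x * M' (morseXi D α x)
          - morseXi D α x / 2 * M (morseXi D α x)) * Real.exp (-(morseXi D α x) / 2))) x := by
  have hpos : ∀ y, 0 < morseXi D α y := fun y =>
    mul_pos (by positivity) (Real.exp_pos _)
  have hx := morseXi_hasDerivAt D α x
  set ξ := morseXi D α with hξ
  have hA : HasDerivAt (fun y => ξ y ^ p) (p * ξ x ^ (p - 1) * (-α * ξ x)) x :=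
    (Real.hasDerivAt_rpow_const (Or.inl (hpos x).ne')).comp x hx
  have hB : HasDerivAt (fun y => M (ξ y)) (M' (ξ x) * (-α * ξ x)) x :=
    (hM _ (hpos x)).comp x hx
  have hC : HasDerivAt (fun y => Real.exp (-(ξ y) / 2))
      (Real.exp (-(ξ x) / 2) * (-(-α * ξ x) / 2)) x :=
    ((hx.neg).div_const 2).exp
  have h := (hA.mul hB).mul hC
  refine h.congr_deriv ?_
  have hp : ξ x ^ (p - 1) * ξ x = ξ x ^ p := by
    rw [Real.rpow_sub_one (hpos x).ne']; exact div_mul_cancel₀ _ (hpos x).ne'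
  simp only [Pi.mul_apply]; rw [← hp]; ring

/-- Morse potential eigenstates: if `D, α > 0`, `n < λ − 1/2`, and
`L ∈ C²((0,∞);ℝ)` satisfies `ξL'' + (2λ − 2n − 1 + 1 − ξ)L' + nL = 0` on `(0,∞)`, then
`ψ = morseWave D α n L` satisfies `i∂_tψ + ½∂_x²ψ − D(1 − e^{−αx})²·ψ = 0` on `ℝ²`,
and so does every constant complex multiple `c·ψ`. -/
theorem morse_solution (D α : ℝ) (hD : 0 < D) (hα : 0 < α) (n : ℕ)
    (hn : (n : ℝ) < morseLam D α - 1 / 2)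
    (L : ℝ → ℝ) (hL : ContDiffOn ℝ 2 L (Set.Ioi (0 : ℝ)))
    (hODE : ∀ ξ ∈ Set.Ioi (0 : ℝ),
      ξ * deriv (deriv L) ξ + ((2 * morseLam D α - 2 * (n : ℝ) - 1) + 1 - ξ) * deriv L ξ
        + (n : ℝ) * L ξ = 0) :
    (∀ x t : ℝ,
      Complex.I * deriv (fun s => morseWave D α n L x s) t
        + (1 / 2) * deriv (deriv (fun y => morseWave D α n L y t)) x
        - ((D * (1 - Real.exp (-α * x)) ^ 2 : ℝ) : ℂ) * morseWave D α n L x t = 0) ∧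
    (∀ c : ℂ, ∀ x t : ℝ,
      Complex.I * deriv (fun s => c * morseWave D α n L x s) t
        + (1 / 2) * deriv (deriv (fun y => c * morseWave D α n L y t)) x
        - ((D * (1 - Real.exp (-α * x)) ^ 2 : ℝ) : ℂ) * (c * morseWave D α n L x t) = 0) := by
  set l := morseLam D α with hl_def
  have hn0 : (0:ℝ) ≤ (n:ℝ) := Nat.cast_nonneg n
  have hl : 0 < l := by linarith
  set s : ℝ := l - (n : ℝ) - 1 / 2 with hs_def
  set E : ℝ := morseEnergy D α n with hE_def
  have hpos : ∀ y, 0 < morseXi D α y := fun y =>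
    mul_pos (by positivity) (Real.exp_pos _)
  -- derivatives of L
  have hL1 : ∀ u, 0 < u → HasDerivAt L (deriv L u) u := by
    intro u hu
    exact ((hL.contDiffAt (isOpen_Ioi.mem_nhds hu)).differentiableAt
      (by norm_num)).hasDerivAt
  have hdL : ContDiffOn ℝ 1 (deriv L) (Set.Ioi (0 : ℝ)) :=
    hL.deriv_of_isOpen isOpen_Ioi (by norm_num)
  have hL2 : ∀ u, 0 < u → HasDerivAt (deriv L) (deriv (deriv L) u) u := by
    intro u hu
    exact ((hdL.contDiffAt (isOpen_Ioi.mem_nhds hu)).differentiableAt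
      (by norm_num)).hasDerivAt
  -- the spatial factor and its derivatives
  set F : ℝ → ℝ := fun x => morseXi D α x ^ s * L (morseXi D α x)
    * Real.exp (-(morseXi D α x) / 2) with hF_def
  set M1 : ℝ → ℝ := fun u => s * L u + u * deriv L u - u / 2 * L u with hM1_def
  set M1' : ℝ → ℝ := fun u => s * deriv L u + (deriv L u + u * deriv (deriv L) u)
    - (L u / 2 + u / 2 * deriv L u) with hM1'_def
  have hM1d : ∀ u, 0 < u → HasDerivAt M1 (M1' u) u := by
    intro u hu
    have h := (((hL1 u hu).const_mul s).add
        ((hasDerivAt_id u).mul (hL2 u hu))).sub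
      (((hasDerivAt_id u).div_const 2).mul (hL1 u hu))
    refine h.congr_deriv ?_
    simp only [hM1'_def, id_eq]
    ring
  -- first spatial derivative
  set F1 : ℝ → ℝ := fun x => -α * (morseXi D α x ^ s * M1 (morseXi D α x)
    * Real.exp (-(morseXi D α x) / 2)) with hF1_def
  have hFd : ∀ x, HasDerivAt F (F1 x) x := fun x =>
    morseT_hasDerivAt D α hl s L (deriv L) hL1 x
  -- second spatial derivative
  set F2 : ℝ → ℝ := fun x => -α * (-α * (morseXi D α x ^ s * (s * M1 (morseXi D α x)
      + morseXi D α x * M1' (morseXi D α x)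
      - morseXi D α x / 2 * M1 (morseXi D α x)) * Real.exp (-(morseXi D α x) / 2))) with hF2_def
  have hF1d : ∀ x, HasDerivAt F1 (F2 x) x := fun x =>
    (morseT_hasDerivAt D α hl s M1 M1' hM1d x).const_mul (-α)
  -- algebraic facts
  have h2D : Real.sqrt (2 * D) = l * α := by
    rw [hl_def, morseLam]; field_simp
  have hsq : l ^ 2 * α ^ 2 = 2 * D := by
    have h := Real.sq_sqrt (by positivity : (0:ℝ) ≤ 2 * D)
    rw [h2D] at h; nlinarith [h]
  have hE2 : 2 * E = α ^ 2 * (l ^ 2 - s ^ 2) := by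
    rw [hE_def, morseEnergy, morseOmega, h2D, hs_def]
    rw [← hl_def]
    field_simp
    ring
  -- the key ODE reduction: F'' = 2(V - E)·F
  have key : ∀ x : ℝ, F2 x = (2 * (D * (1 - Real.exp (-α * x)) ^ 2) - 2 * E) * F x := by
    intro x
    have hODEx := hODE (morseXi D α x) (hpos x)
    have hu : morseXi D α x = 2 * l * Real.exp (-α * x) := by rw [morseXi, hl_def]
    have hDv : D = l ^ 2 * α ^ 2 / 2 := by linarith
    have hEv : E = α ^ 2 * (l ^ 2 - s ^ 2) / 2 := by rw [← hE2]; ring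
    rw [hF2_def, hF_def]
    simp only [hM1_def, hM1'_def]
    rw [hu] at hODEx ⊢
    rw [hDv, hEv, hs_def]
    linear_combination (α ^ 2 * (2 * l * Real.exp (-α * x)) ^ (l - (n:ℝ) - 1/2)
      * Real.exp (-(2 * l * Real.exp (-α * x)) / 2) * (2 * l * Real.exp (-α * x))) * hODEx
  -- assembling the PDE in ℂ
  have main : ∀ c : ℂ, ∀ x t : ℝ,
      Complex.I * deriv (fun s => c * morseWave D α n L x s) t
        + (1 / 2) * deriv (deriv (fun y => c * morseWave D α n L y t)) x
        - ((D * (1 - Real.exp (-α * x)) ^ 2 : ℝ) : ℂ) * (c * morseWave D α n L x t) = 0 := by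
    intro c x t
    set eC : ℂ := Complex.exp (-Complex.I * (t : ℂ) * ((E : ℝ) : ℂ)) with heC
    -- time derivative
    have hlin : HasDerivAt (fun u : ℝ => -Complex.I * ((u : ℝ) : ℂ) * ((E:ℝ):ℂ))
        (-Complex.I * ((E:ℝ):ℂ)) t := by
      have h1 : HasDerivAt (fun u : ℝ => ((u : ℝ) : ℂ)) 1 t := by
        exact Complex.ofRealCLM.hasDerivAt (x := t)
      have h2 := (h1.const_mul (-Complex.I)).mul_const ((E:ℝ):ℂ)
      refine h2.congr_deriv ?_; ring
    have ht : HasDerivAt (fun u : ℝ => c * morseWave D α n L x u)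
        (c * (((F x : ℝ) : ℂ) * (eC * (-Complex.I * ((E:ℝ):ℂ))))) t := by
      have h := ((hlin.cexp).const_mul (((F x : ℝ)) : ℂ)).const_mul c
      exact h
    -- first spatial derivative, at every point
    have hd1 : ∀ y, HasDerivAt (fun y => c * morseWave D α n L y t)
        (c * (((F1 y : ℝ) : ℂ) * eC)) y := by
      intro y
      have hR : HasDerivAt (fun y => ((F y : ℝ) : ℂ)) (((F1 y : ℝ) : ℂ)) y :=
        Complex.ofRealCLM.hasFDerivAt.comp_hasDerivAt y (hFd y)
      exact (hR.mul_const eC).const_mul c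
    have hder1 : (deriv (fun y => c * morseWave D α n L y t))
        = fun y => c * (((F1 y : ℝ) : ℂ) * eC) := funext fun y => (hd1 y).deriv
    have hd2 : HasDerivAt (fun y => c * (((F1 y : ℝ) : ℂ) * eC))
        (c * (((F2 x : ℝ) : ℂ) * eC)) x := by
      have hR : HasDerivAt (fun y => ((F1 y : ℝ) : ℂ)) (((F2 x : ℝ) : ℂ)) x :=
        Complex.ofRealCLM.hasFDerivAt.comp_hasDerivAt x (hF1d x)
      exact (hR.mul_const eC).const_mul c
    rw [ht.deriv, hder1, hd2.deriv]
    have hW : morseWave D α n L x t = ((F x : ℝ) : ℂ) * eC := rfl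
    rw [hW]
    have keyC : ((F2 x : ℝ) : ℂ)
        = 2 * ((D * (1 - Real.exp (-α * x)) ^ 2 : ℝ) : ℂ) * ((F x : ℝ) : ℂ)
          - 2 * ((E : ℝ) : ℂ) * ((F x : ℝ) : ℂ) := by
      rw [key x]; push_cast; ring
    linear_combination (1/2 * c * eC) * keyC
      - (c * ((F x : ℝ) : ℂ) * eC * ((E:ℝ):ℂ)) * Complex.I_sq
  refine ⟨fun x t => ?_, main⟩
  have h := main 1 x t
  simpa using h

end
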